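/- (Lemma S1.) Suppose the efficiency setup holds and h̃ is an admissible index function such that for every admissible index function h, −E[h(V) Dᵀ] = E[M² h(V) h̃(V)ᵀ] as p×p matrices. Then for every admissible index function h such that E[h(V) Dᵀ] and E[M² h̃(V) h̃(V)ᵀ] are invertible, the difference of asymptotic variances E[h(V) Dᵀ]⁻¹ · E[M² h(V) h(V)ᵀ] · (E[h(V) Dᵀ]⁻¹)ᵀ − E[M² h̃(V) h̃(V)ᵀ]⁻¹ is positive semidefinite; that is, the estimator indexed by h̃ is most efficient. -/

import Mathlib

open MeasureTheory Matrix

open scoped ENNReal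


section Aux

variable {Ω : Type*} [MeasurableSpace Ω] {P : Measure Ω}

/-- Product of two L² functions is integrable. -/
lemma aux_integrable_mul {f g : Ω → ℝ} (hf : MemLp f 2 P) (hg : MemLp g 2 P) :
    Integrable (fun ω => f ω * g ω) P := by
  have h : (1 : ℝ≥0∞) / 1 = 1 / 2 + 1 / 2 := by
    rw [ENNReal.div_add_div_same]
    norm_num
    exact (ENNReal.div_self (by norm_num) (by norm_num)).symm
  have := hf.smul (φ := g) (r := 1) hg
  rw [memLp_one_iff_integrable] at this
  exact (by simpa [Pi.smul_apply, smul_eq_mul, mul_comm] using this : Integrable (f * g) P)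

/-- `M * (g ∘ V)` is L² when `M` is L² and `g` is bounded measurable. -/
lemma aux_memℒp_mul_comp {𝒱 : Type*} [MeasurableSpace 𝒱]
    (V : Ω → 𝒱) (hV : Measurable V) {M : Ω → ℝ} (hM2 : MemLp M 2 P)
    {g : 𝒱 → ℝ} (hg : Measurable g) {C : ℝ} (hgb : ∀ v, ‖g v‖ ≤ C) :
    MemLp (fun ω => M ω * g (V ω)) 2 P := by
  have htop : MemLp (fun ω => g (V ω)) ⊤ P :=
    memLp_top_of_bound ((hg.comp hV).aestronglyMeasurable) C
      (Filter.Eventually.of_forall fun ω => hgb (V ω))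
  have := hM2.smul (φ := fun ω => g (V ω)) (r := 2) htop
  exact (by simpa [Pi.smul_apply, smul_eq_mul, mul_comm] using this :
    MemLp (M * fun ω => g (V ω)) 2 P)

lemma aux_sum_integral_expand {p : ℕ} (P : Measure Ω) (c d : Fin p → ℝ)
    (f g : Ω → Fin p → ℝ) (hint : ∀ i j, Integrable (fun ω => f ω i * g ω j) P) :
    ∫ ω, (∑ i, c i * f ω i) * (∑ j, d j * g ω j) ∂P
      = ∑ i, ∑ j, c i * d j * ∫ ω, f ω i * g ω j ∂P := by
  have hpt : ∀ ω, (∑ i, c i * f ω i) * (∑ j, d j * g ω j)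
      = ∑ i, ∑ j, c i * d j * (f ω i * g ω j) := by
    intro ω
    rw [Finset.sum_mul_sum]
    exact Finset.sum_congr rfl fun i _ => Finset.sum_congr rfl fun j _ => by ring
  simp_rw [hpt]
  rw [integral_finset_sum _ fun i _ => integrable_finset_sum _
      fun j _ => ((hint i j).const_mul _)]
  refine Finset.sum_congr rfl fun i _ => ?_
  rw [integral_finset_sum _ fun j _ => ((hint i j).const_mul _)]
  exact Finset.sum_congr rfl fun j _ => integral_const_mul _ _

/-- Pure matrix algebra step. -/
lemma aux_matrix {p : ℕ} (A B S : Matrix (Fin p) (Fin p) ℝ)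
    (hA : IsUnit A.det) (hS : IsUnit S.det) (hB : Bᵀ = B) (hSs : Sᵀ = S)
    (key : ∀ u w : Fin p → ℝ,
      0 ≤ u ⬝ᵥ (B *ᵥ u) - 2 * (u ⬝ᵥ (A *ᵥ w)) + w ⬝ᵥ (S *ᵥ w)) :
    (A⁻¹ * B * (A⁻¹)ᵀ - S⁻¹).PosSemidef := by
  rw [Matrix.posSemidef_iff_dotProduct_mulVec]
  constructor
  · show _ = _
    rw [Matrix.conjTranspose_eq_transpose_of_trivial]
    simp [Matrix.transpose_sub, Matrix.transpose_mul, Matrix.transpose_nonsing_inv,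
      hB, hSs, Matrix.mul_assoc]
  · intro x
    have hstar : star x = x := by
      funext i; simp
    rw [hstar]
    set u : Fin p → ℝ := (A⁻¹)ᵀ *ᵥ x with hu
    set w : Fin p → ℝ := S⁻¹ *ᵥ x with hw
    have h1 : x ⬝ᵥ ((A⁻¹ * B * (A⁻¹)ᵀ) *ᵥ x) = u ⬝ᵥ (B *ᵥ u) := by
      rw [← Matrix.mulVec_mulVec, ← Matrix.mulVec_mulVec,
        dotProduct_mulVec, ← Matrix.mulVec_transpose]
    have h2 : u ⬝ᵥ (A *ᵥ w) = x ⬝ᵥ w := by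
      have hAT : IsUnit Aᵀ.det := by rwa [Matrix.det_transpose]
      rw [dotProduct_mulVec u A w, ← Matrix.mulVec_transpose, hu,
        Matrix.mulVec_mulVec, Matrix.transpose_nonsing_inv,
        Matrix.mul_nonsing_inv _ hAT, Matrix.one_mulVec]
    have h3 : w ⬝ᵥ (S *ᵥ w) = x ⬝ᵥ w := by
      rw [hw, Matrix.mulVec_mulVec, Matrix.mul_nonsing_inv _ hS, Matrix.one_mulVec,
        dotProduct_comm]
    have h4 : x ⬝ᵥ ((A⁻¹ * B * (A⁻¹)ᵀ - S⁻¹) *ᵥ x)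
        = u ⬝ᵥ (B *ᵥ u) - 2 * (u ⬝ᵥ (A *ᵥ w)) + w ⬝ᵥ (S *ᵥ w) := by
      rw [Matrix.sub_mulVec, dotProduct_sub, h1, h2, h3]
      ring
    rw [h4]
    exact key u w

lemma aux_dot {p : ℕ} (B : Matrix (Fin p) (Fin p) ℝ) (u v : Fin p → ℝ) :
    u ⬝ᵥ (B *ᵥ v) = ∑ i, ∑ j, u i * v j * B i j := by
  simp only [dotProduct, Matrix.mulVec, Finset.mul_sum]
  exact Finset.sum_congr rfl fun i _ => Finset.sum_congr rfl fun j _ => by ring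

end Aux


/-- **Lemma S1.** If `h̃` is an admissible (bounded measurable) index function
such that `−E[h(V) Dᵀ] = E[M² h(V) h̃(V)ᵀ]` for every admissible index function `h`, then for
every admissible `h` (with the relevant matrices invertible) the difference of asymptotic
variances
`E[h(V) Dᵀ]⁻¹ E[M² h(V) h(V)ᵀ] (E[h(V) Dᵀ]⁻¹)ᵀ − E[M² h̃(V) h̃(V)ᵀ]⁻¹`
is positive semidefinite, i.e. the estimator indexed by `h̃` is most efficient. -/
theorem lemma_S1_efficiency
    {Ω : Type*} [MeasurableSpace Ω] {P : Measure Ω} [IsProbabilityMeasure P]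
    {𝒱 : Type*} [MeasurableSpace 𝒱]
    (V : Ω → 𝒱) (hV : Measurable V)
    (p : ℕ)
    (M : Ω → ℝ) (hM : Measurable M) (hM2 : MemLp M 2 P)
    (D : Ω → Fin p → ℝ) (hD : Measurable D)
    (hD2 : ∀ i, MemLp (fun ω => D ω i) 2 P)
    (ht : 𝒱 → Fin p → ℝ) (hht : Measurable ht)
    (Ct : ℝ) (htbdd : ∀ v, ‖ht v‖ ≤ Ct)
    -- `−E[h(V) Dᵀ] = E[M² h(V) h̃(V)ᵀ]` for every admissible index function `h`
    (hopt : ∀ (h : 𝒱 → Fin p → ℝ), Measurable h → (∃ C : ℝ, ∀ v, ‖h v‖ ≤ C) →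
      ∀ i j, -∫ ω, h (V ω) i * D ω j ∂P = ∫ ω, (M ω) ^ 2 * (h (V ω) i * ht (V ω) j) ∂P) :
    ∀ (h : 𝒱 → Fin p → ℝ), Measurable h → (∃ C : ℝ, ∀ v, ‖h v‖ ≤ C) →
      IsUnit (Matrix.of fun i j => ∫ ω, h (V ω) i * D ω j ∂P : Matrix (Fin p) (Fin p) ℝ).det →
      IsUnit (Matrix.of fun i j => ∫ ω, (M ω) ^ 2 * (ht (V ω) i * ht (V ω) j) ∂P :
        Matrix (Fin p) (Fin p) ℝ).det →
      ((Matrix.of fun i j => ∫ ω, h (V ω) i * D ω j ∂P : Matrix (Fin p) (Fin p) ℝ)⁻¹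
          * (Matrix.of fun i j => ∫ ω, (M ω) ^ 2 * (h (V ω) i * h (V ω) j) ∂P)
          * ((Matrix.of fun i j => ∫ ω, h (V ω) i * D ω j ∂P :
              Matrix (Fin p) (Fin p) ℝ)⁻¹)ᵀ
        - (Matrix.of fun i j => ∫ ω, (M ω) ^ 2 * (ht (V ω) i * ht (V ω) j) ∂P :
            Matrix (Fin p) (Fin p) ℝ)⁻¹).PosSemidef := by
  intro h hmeas hbd hAdet hSdet
  obtain ⟨C, hC⟩ := hbd
  -- L² facts for the components
  have hL2h : ∀ i, MemLp (fun ω => M ω * h (V ω) i) 2 P := fun i =>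
    aux_memℒp_mul_comp V hV hM2 ((measurable_pi_apply i).comp hmeas)
      (fun v => (norm_le_pi_norm (h v) i).trans (hC v))
  have hL2t : ∀ i, MemLp (fun ω => M ω * ht (V ω) i) 2 P := fun i =>
    aux_memℒp_mul_comp V hV hM2 ((measurable_pi_apply i).comp hht)
      (fun v => (norm_le_pi_norm (ht v) i).trans (htbdd v))
  refine aux_matrix _ _ _ hAdet hSdet ?_ ?_ ?_
  · -- symmetry of B
    ext i j
    simp only [Matrix.transpose_apply, Matrix.of_apply]
    exact integral_congr_ae (Filter.Eventually.of_forall fun ω => by ring)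
  · -- symmetry of S
    ext i j
    simp only [Matrix.transpose_apply, Matrix.of_apply]
    exact integral_congr_ae (Filter.Eventually.of_forall fun ω => by ring)
  · intro u w
    set f : Ω → Fin p → ℝ := fun ω i => M ω * h (V ω) i with hf_def
    set g : Ω → Fin p → ℝ := fun ω i => M ω * ht (V ω) i with hg_def
    set F : Ω → ℝ := fun ω => ∑ i, u i * f ω i with hF_def
    set G : Ω → ℝ := fun ω => ∑ i, w i * g ω i with hG_def
    have hF2 : MemLp F 2 P := by
      exact memLp_finset_sum Finset.univ fun i _ => (hL2h i).const_mul (u i)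
    have hG2 : MemLp G 2 P := by
      exact memLp_finset_sum Finset.univ fun i _ => (hL2t i).const_mul (w i)
    have hFF : Integrable (fun ω => F ω * F ω) P := aux_integrable_mul hF2 hF2
    have hFG : Integrable (fun ω => F ω * G ω) P := aux_integrable_mul hF2 hG2
    have hGG : Integrable (fun ω => G ω * G ω) P := aux_integrable_mul hG2 hG2
    -- nonnegativity of E[(F+G)²]
    have hnn : 0 ≤ ∫ ω, (F ω + G ω) ^ 2 ∂P := integral_nonneg fun ω => sq_nonneg _
    have hsplit : ∫ ω, (F ω + G ω) ^ 2 ∂P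
        = (∫ ω, F ω * F ω ∂P) + 2 * (∫ ω, F ω * G ω ∂P) + ∫ ω, G ω * G ω ∂P := by
      have e1 : ∫ ω, (F ω + G ω) ^ 2 ∂P
          = ∫ ω, (F ω * F ω + 2 * (F ω * G ω) + G ω * G ω) ∂P :=
        integral_congr_ae (Filter.Eventually.of_forall fun ω => by ring)
      have i1 : Integrable (fun ω => F ω * F ω + 2 * (F ω * G ω)) P :=
        hFF.add (hFG.const_mul 2)
      rw [e1, integral_add i1 hGG, integral_add hFF (hFG.const_mul 2), integral_const_mul]
    -- expansions of the three integrals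
    have eFF : ∫ ω, F ω * F ω ∂P
        = ∑ i, ∑ j, u i * u j * ∫ ω, f ω i * f ω j ∂P :=
      aux_sum_integral_expand P u u f f
        (fun i j => aux_integrable_mul (hL2h i) (hL2h j))
    have eFG : ∫ ω, F ω * G ω ∂P
        = ∑ i, ∑ j, u i * w j * ∫ ω, f ω i * g ω j ∂P :=
      aux_sum_integral_expand P u w f g
        (fun i j => aux_integrable_mul (hL2h i) (hL2t j))
    have eGG : ∫ ω, G ω * G ω ∂P
        = ∑ i, ∑ j, w i * w j * ∫ ω, g ω i * g ω j ∂P :=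
      aux_sum_integral_expand P w w g g
        (fun i j => aux_integrable_mul (hL2t i) (hL2t j))
    -- identify the inner integrals with matrix entries
    have hB : ∀ i j, ∫ ω, f ω i * f ω j ∂P
        = ∫ ω, (M ω) ^ 2 * (h (V ω) i * h (V ω) j) ∂P := fun i j =>
      integral_congr_ae (Filter.Eventually.of_forall fun ω => by simp [hf_def]; ring)
    have hS : ∀ i j, ∫ ω, g ω i * g ω j ∂P
        = ∫ ω, (M ω) ^ 2 * (ht (V ω) i * ht (V ω) j) ∂P := fun i j =>
      integral_congr_ae (Filter.Eventually.of_forall fun ω => by simp [hg_def]; ring)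
    have hA : ∀ i j, ∫ ω, f ω i * g ω j ∂P
        = -∫ ω, h (V ω) i * D ω j ∂P := fun i j => by
      have e : ∫ ω, f ω i * g ω j ∂P
          = ∫ ω, (M ω) ^ 2 * (h (V ω) i * ht (V ω) j) ∂P :=
        integral_congr_ae (Filter.Eventually.of_forall fun ω => by
          simp [hf_def, hg_def]; ring)
      rw [e, ← hopt h hmeas ⟨C, hC⟩ i j]
    -- put it together
    rw [aux_dot, aux_dot, aux_dot]
    simp only [Matrix.of_apply]
    have hFGval : ∫ ω, F ω * G ω ∂P
        = -(∑ i, ∑ j, u i * w j * ∫ ω, h (V ω) i * D ω j ∂P) := by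
      rw [eFG]
      simp_rw [hA]
      simp [Finset.sum_neg_distrib, mul_neg]
    calc (0:ℝ) ≤ ∫ ω, (F ω + G ω) ^ 2 ∂P := hnn
      _ = (∫ ω, F ω * F ω ∂P) + 2 * (∫ ω, F ω * G ω ∂P) + ∫ ω, G ω * G ω ∂P := hsplit
      _ = (∑ i, ∑ j, u i * u j * ∫ ω, (M ω) ^ 2 * (h (V ω) i * h (V ω) j) ∂P)
            - 2 * (∑ i, ∑ j, u i * w j * ∫ ω, h (V ω) i * D ω j ∂P)
            + ∑ i, ∑ j, w i * w j * ∫ ω, (M ω) ^ 2 * (ht (V ω) i * ht (V ω) j) ∂P := by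
          rw [hFGval, eFF, eGG]
          simp_rw [hB, hS]
          ring
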